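/- Suboptimality of the source-optimal classifier under covariate shift: let D_S be a data distribution on X × {−1,+1} and let H be a set of measurable classifiers. Let ω₁, ω₂ : X → [0,∞) be measurable importance weights such that D₁ := D_S.withDensity((x,y) ↦ ω₁(x)) and D₂ := D_S.withDensity((x,y) ↦ ω₂(x)) are probability measures (covariate-shifted distributions induced by deploying models h₁ and h₂ respectively), and assume ω₁ and ω₂ are square-integrable with respect to D_S. Suppose h₁ ∈ H minimizes the source error, i.e., err_{D_S}(h₁) ≤ err_{D_S}(h') for all h' ∈ H. Then for every h₂ ∈ H: err_{D₁}(h₁) − err_{D₂}(h₂) ≤ sqrt(err_{D_S}(h₂)) · ( sqrt(Var_{D_S}(ω₁)) + sqrt(Var_{D_S}(ω₂)) ), where Var_{D_S}(ω) := E_{D_S}[ω(X)²] − (E_{D_S}[ω(X)])² is the variance of the importance weight under the source feature distribution. -/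

import Mathlib

open MeasureTheory

/-- Classification error of classifier `h` (labels encoded as `Bool`, `true = +1`,
`false = -1`) on a data distribution `D` over `X × Bool`. -/
noncomputable def err {X : Type*} [MeasurableSpace X]
    (D : Measure (X × Bool)) (h : X → Bool) : ℝ :=
  (D {p : X × Bool | h p.1 ≠ p.2}).toReal

/-- The covariate-shifted distribution induced from `D_S` by an importance weight
`ω : X → [0, ∞)`: its density with respect to `D_S` is `ω` composed with the feature
projection. -/
noncomputable def inducedCS {X : Type*} [MeasurableSpace X]
    (DS : Measure (X × Bool)) (ω : X → ℝ) : Measure (X × Bool) :=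
  DS.withDensity (fun p => ENNReal.ofReal (ω p.1))

/-- Variance of the importance weight `ω` under the source distribution:
`E_{D_S}[ω(X)²] − (E_{D_S}[ω(X)])²`. -/
noncomputable def varW {X : Type*} [MeasurableSpace X]
    (DS : Measure (X × Bool)) (ω : X → ℝ) : ℝ :=
  (∫ p : X × Bool, (ω p.1) ^ 2 ∂DS) - (∫ p : X × Bool, ω p.1 ∂DS) ^ 2

/-- Suboptimality of the source-optimal classifier under covariate shift: if `h₁ ∈ H`
minimizes the source error and `D₁, D₂` are the covariate-shifted distributions induced
by square-integrable importance weights `ω₁, ω₂`, then for every `h₂ ∈ H`: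
`err_{D₁}(h₁) − err_{D₂}(h₂) ≤ √(err_{D_S}(h₂)) · (√Var(ω₁) + √Var(ω₂))`. -/
lemma shift_err_abs {X : Type*} [MeasurableSpace X]
    (DS : Measure (X × Bool)) [IsProbabilityMeasure DS]
    (ω : X → ℝ) (hm : Measurable ω) (hnn : ∀ x, 0 ≤ ω x)
    (hprob : IsProbabilityMeasure (inducedCS DS ω))
    (hint : Integrable (fun p : X × Bool => ω p.1) DS)
    (hsq : Integrable (fun p : X × Bool => (ω p.1) ^ 2) DS)
    (h : X → Bool) (hh : Measurable h) :
    |err (inducedCS DS ω) h - err DS h| ≤ Real.sqrt (err DS h) * Real.sqrt (varW DS ω) := by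
  set A : Set (X × Bool) := {p : X × Bool | h p.1 ≠ p.2} with hAdef
  have hA : MeasurableSet A := by
    have : A = (fun p : X × Bool => (h p.1, p.2)) ⁻¹' {q : Bool × Bool | q.1 ≠ q.2} := rfl
    rw [this]
    exact ((hh.comp measurable_fst).prodMk measurable_snd)
      ((Set.toFinite _).measurableSet)
  have hωfst : Measurable (fun p : X × Bool => ω p.1) := hm.comp measurable_fst
  have hωnn : ∀ p : X × Bool, 0 ≤ ω p.1 := fun p => hnn p.1
  -- total mass one
  have hmass : ∫ p : X × Bool, ω p.1 ∂DS = 1 := by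
    have h1 : (inducedCS DS ω) Set.univ = 1 := measure_univ
    rw [inducedCS, withDensity_apply _ MeasurableSet.univ, Measure.restrict_univ] at h1
    rw [← ofReal_integral_eq_lintegral_ofReal hint (Filter.Eventually.of_forall hωnn)] at h1
    have := (ENNReal.ofReal_eq_one).mp h1
    linarith
  -- err of shifted measure
  have herr_shift : err (inducedCS DS ω) h = ∫ p in A, ω p.1 ∂DS := by
    rw [err, inducedCS, withDensity_apply _ hA,
      ← ofReal_integral_eq_lintegral_ofReal hint.restrict
        (Filter.Eventually.of_forall hωnn),
      ENNReal.toReal_ofReal (integral_nonneg hωnn)]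
  have herrS : err DS h = ∫ p, A.indicator (fun _ => (1:ℝ)) p ∂DS := by
    rw [err]; exact (integral_indicator_one hA).symm
  have hind_int : Integrable (A.indicator (fun _ => (1:ℝ))) DS :=
    (integrable_const (1:ℝ)).indicator hA
  have hωA_int : Integrable (A.indicator (fun p : X × Bool => ω p.1)) DS :=
    hint.indicator hA
  -- difference as single integral
  have hdiff : err (inducedCS DS ω) h - err DS h
      = ∫ p, (ω p.1 - 1) * A.indicator (fun _ => (1:ℝ)) p ∂DS := by
    have : ∀ p, (ω p.1 - 1) * A.indicator (fun _ => (1:ℝ)) p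
        = A.indicator (fun p : X × Bool => ω p.1) p - A.indicator (fun _ => (1:ℝ)) p := by
      intro p
      by_cases hp : p ∈ A <;> simp [hp]
    simp only [this]
    rw [integral_sub hωA_int hind_int, herr_shift, herrS, integral_indicator hA,
      integral_indicator hA]
  rw [hdiff]
  -- Cauchy-Schwarz
  have hsub_mem : MemLp (fun p : X × Bool => ω p.1 - 1) 2 DS := by
    rw [memLp_two_iff_integrable_sq (f := fun p : X × Bool => ω p.1 - 1) ((hωfst.sub measurable_const).aestronglyMeasurable)]
    have : (fun p : X × Bool => (ω p.1 - 1) ^ 2)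
        = fun p => (ω p.1) ^ 2 - 2 * ω p.1 + 1 := by
      funext p; ring
    rw [this]
    exact (hsq.sub (hint.const_mul 2)).add (integrable_const 1)
  have habs_mem : MemLp (fun p : X × Bool => |ω p.1 - 1|) (ENNReal.ofReal 2) DS := by
    have h2 : ENNReal.ofReal 2 = 2 := by norm_num
    rw [h2]
    simpa [Real.norm_eq_abs] using hsub_mem.norm
  have hind_mem : MemLp (A.indicator (fun _ => (1:ℝ))) (ENNReal.ofReal 2) DS := by
    exact memLp_indicator_const _ hA 1 (Or.inr (measure_ne_top DS A))
  have hpq : Real.HolderConjugate 2 2 := Real.HolderConjugate.two_two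
  have hCS := integral_mul_le_Lp_mul_Lq_of_nonneg hpq
    (Filter.Eventually.of_forall (fun p => abs_nonneg (ω p.1 - 1)))
    (Filter.Eventually.of_forall (fun p => Set.indicator_nonneg (fun _ _ => zero_le_one) p))
    habs_mem hind_mem
  have habs_le : |∫ p, (ω p.1 - 1) * A.indicator (fun _ => (1:ℝ)) p ∂DS|
      ≤ ∫ p, |ω p.1 - 1| * A.indicator (fun _ => (1:ℝ)) p ∂DS := by
    calc |∫ p, (ω p.1 - 1) * A.indicator (fun _ => (1:ℝ)) p ∂DS|
        ≤ ∫ p, |ω p.1 - 1| * |A.indicator (fun _ => (1:ℝ)) p| ∂DS := by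
          simpa [Real.norm_eq_abs, abs_mul] using
            norm_integral_le_integral_norm (fun p => (ω p.1 - 1) * A.indicator (fun _ => (1:ℝ)) p) (μ := DS)
      _ = ∫ p, |ω p.1 - 1| * A.indicator (fun _ => (1:ℝ)) p ∂DS := by
          congr 1; funext p
          by_cases hp : p ∈ A <;> simp [hp, abs_mul]
  refine habs_le.trans (hCS.trans (le_of_eq ?_))
  -- identify the two factors
  have hfac1 : ∫ p, |ω p.1 - 1| ^ (2:ℝ) ∂DS = varW DS ω := by
    have : (fun p : X × Bool => |ω p.1 - 1| ^ (2:ℝ))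
        = fun p => (ω p.1) ^ 2 - 2 * ω p.1 + 1 := by
      funext p
      rw [show ((2:ℝ)) = ((2:ℕ):ℝ) by norm_num, Real.rpow_natCast, sq_abs]
      ring
    have i1 : Integrable (fun p : X × Bool => (ω p.1) ^ 2 - 2 * ω p.1) DS :=
      hsq.sub (hint.const_mul 2)
    have i2 : Integrable (fun p : X × Bool => 2 * ω p.1) DS := hint.const_mul 2
    rw [this, integral_add i1 (integrable_const 1), integral_sub hsq i2,
      integral_const_mul, hmass, varW, hmass]
    simp only [one_pow, integral_const, measure_univ, probReal_univ, ENNReal.toReal_one, smul_eq_mul, mul_one]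
    ring
  have hfac2 : ∫ p, A.indicator (fun _ => (1:ℝ)) p ^ (2:ℝ) ∂DS = err DS h := by
    have : (fun p : X × Bool => A.indicator (fun _ => (1:ℝ)) p ^ (2:ℝ))
        = A.indicator (fun _ => (1:ℝ)) := by
      funext p; by_cases hp : p ∈ A <;> simp [hp]
    rw [this, ← herrS]
  rw [hfac1, hfac2, ← Real.sqrt_eq_rpow, ← Real.sqrt_eq_rpow, mul_comm]

theorem source_optimal_suboptimality_covariate_shift
    {X : Type*} [MeasurableSpace X]
    (DS : Measure (X × Bool)) [IsProbabilityMeasure DS]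
    (H : Set (X → Bool)) (hHmeas : ∀ f ∈ H, Measurable f)
    (ω₁ ω₂ : X → ℝ)
    (hω₁_meas : Measurable ω₁) (hω₂_meas : Measurable ω₂)
    (hω₁_nonneg : ∀ x, 0 ≤ ω₁ x) (hω₂_nonneg : ∀ x, 0 ≤ ω₂ x)
    (hD₁_prob : IsProbabilityMeasure (inducedCS DS ω₁))
    (hD₂_prob : IsProbabilityMeasure (inducedCS DS ω₂))
    (hω₁_int : Integrable (fun p : X × Bool => ω₁ p.1) DS)
    (hω₂_int : Integrable (fun p : X × Bool => ω₂ p.1) DS)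
    (hω₁_sq_int : Integrable (fun p : X × Bool => (ω₁ p.1) ^ 2) DS)
    (hω₂_sq_int : Integrable (fun p : X × Bool => (ω₂ p.1) ^ 2) DS)
    (h₁ : X → Bool) (hh₁ : h₁ ∈ H)
    (h₁_min : ∀ h' ∈ H, err DS h₁ ≤ err DS h')
    (h₂ : X → Bool) (hh₂ : h₂ ∈ H) :
    err (inducedCS DS ω₁) h₁ - err (inducedCS DS ω₂) h₂ ≤
      Real.sqrt (err DS h₂) *
        (Real.sqrt (varW DS ω₁) + Real.sqrt (varW DS ω₂)) := by
  have b1 := shift_err_abs DS ω₁ hω₁_meas hω₁_nonneg hD₁_prob hω₁_int hω₁_sq_int h₁ (hHmeas h₁ hh₁)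
  have b2 := shift_err_abs DS ω₂ hω₂_meas hω₂_nonneg hD₂_prob hω₂_int hω₂_sq_int h₂ (hHmeas h₂ hh₂)
  have hmono : Real.sqrt (err DS h₁) ≤ Real.sqrt (err DS h₂) :=
    Real.sqrt_le_sqrt (h₁_min h₂ hh₂)
  have e1 : err (inducedCS DS ω₁) h₁ - err DS h₁ ≤ Real.sqrt (err DS h₂) * Real.sqrt (varW DS ω₁) :=
    le_trans (le_trans (le_abs_self _) b1)
      (mul_le_mul_of_nonneg_right hmono (Real.sqrt_nonneg _))
  have e2 : err DS h₂ - err (inducedCS DS ω₂) h₂ ≤ Real.sqrt (err DS h₂) * Real.sqrt (varW DS ω₂) := by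
    rw [abs_sub_comm] at b2
    exact le_trans (le_abs_self _) b2
  have e3 : err DS h₁ ≤ err DS h₂ := h₁_min h₂ hh₂
  nlinarith [e1, e2, e3]
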